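/- Let S = {1, …, n} be a finite set with n ≥ 1, let S' = {1, …, n−1}, and let X be a functor from the poset 𝒫̄(S) of proper subsets of S to simplicial sets. Define the functor X' on 𝒫̄(S') by X'(T) = X(T ∪ {n}), and let X|_{S'} denote the restriction of X to 𝒫̄(S'). Then there is a natural pushout square in sSet with top map colim_{𝒫̄(S')} X|_{S'} → colim_{𝒫̄(S')} X' (induced by the maps X(T) → X(T ∪ {n})), left map colim_{𝒫̄(S')} X|_{S'} → X(S'), and pushout corner colim_{𝒫̄(S)} X. Moreover, if X is a cofibrant functor, then both vertical maps X(S') → colim_{𝒫̄(S)} X and colim_{𝒫̄(S')} X' → colim_{𝒫̄(S)} X are monomorphisms. -/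

import Mathlib

open CategoryTheory CategoryTheory.Limits Simplicial

namespace Paper

/-- The poset of proper subsets of a finite type `α` (i.e. of the finite set `S = α`),
viewed as a category. -/
abbrev PropSubsets (α : Type) [Fintype α] := {T : Finset α // T ≠ Finset.univ}

/-- The poset of proper subsets of a finite set `T`, viewed as a category. -/
abbrev Below {α : Type} (T : Finset α) := {U : Finset α // U ⊂ T}

variable {α : Type} [Fintype α] [DecidableEq α]

/-- The inclusion of the poset of proper subsets of `T` into the poset of all
subsets of `α`. -/
def belowIncl (T : Finset α) : Below T ⥤ Finset α :=
  Monotone.functor (f := fun U => U.1) (fun _ _ h => h)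

/-- The inclusion of the poset of proper subsets of `T.1` into the poset of proper
subsets of the finite set `α`, for `T` itself a proper subset. -/
def belowInclP (T : PropSubsets α) : Below T.1 ⥤ PropSubsets α :=
  Monotone.functor
    (f := fun U => ⟨U.1, fun h => U.2.not_subset (le_of_le_of_eq T.1.subset_univ h.symm)⟩)
    (fun _ _ h => h)

/-- The canonical map `colim_{𝒫̄(T)} X ⟶ X(T)` for a functor `X` on the poset of all
subsets of `α`. -/
noncomputable def canonicalDesc (X : Finset α ⥤ SSet) (T : Finset α) :
    colimit (belowIncl T ⋙ X) ⟶ X.obj T :=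
  colimit.desc (belowIncl T ⋙ X)
    { pt := X.obj T
      ι :=
        { app := fun (U : Below T) => X.map (homOfLE U.2.subset)
          naturality := fun U V g => by
            dsimp
            rw [Category.comp_id, ← X.map_comp]
            congr 1 } }

/-- A functor on the poset of all subsets of `α` is *cofibrant* if for each subset `T`
the canonical map `colim_{𝒫̄(T)} X ⟶ X(T)` is a monomorphism. -/
def CofibrantFull (X : Finset α ⥤ SSet) : Prop :=
  ∀ T : Finset α, Mono (canonicalDesc X T)

/-- The canonical map `colim_{𝒫̄(T)} X ⟶ X(T)` for a functor `X` defined on the poset of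
proper subsets of `α`, where `T` is a proper subset. -/
noncomputable def canonicalDescP (X : PropSubsets α ⥤ SSet) (T : PropSubsets α) :
    colimit (belowInclP T ⋙ X) ⟶ X.obj T :=
  colimit.desc (belowInclP T ⋙ X)
    { pt := X.obj T
      ι :=
        { app := fun (U : Below T.1) =>
            X.map (homOfLE (show (belowInclP T).obj U ≤ T from U.2.subset))
          naturality := fun U V g => by
            dsimp
            rw [Category.comp_id, ← X.map_comp]
            congr 1 } }

/-- A functor on the poset of proper subsets of `α` is *cofibrant* if for each proper
subset `T` the canonical map `colim_{𝒫̄(T)} X ⟶ X(T)` is a monomorphism. -/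
def CofibrantProp (X : PropSubsets α ⥤ SSet) : Prop :=
  ∀ T : PropSubsets α, Mono (canonicalDescP X T)

/-- For `S = Fin (n+1)` (a finite set with at least one element), the set
`S' = S \ {last}`, viewed as a proper subset of `S`. -/
def lastErase (n : ℕ) : PropSubsets (Fin (n + 1)) :=
  ⟨Finset.univ.erase (Fin.last n), by
    intro h
    exact Finset.notMem_erase (Fin.last n) Finset.univ
      (by rw [h]; exact Finset.mem_univ _)⟩

/-- The monotone map `T ↦ T ∪ {last}` from proper subsets of `S'` to proper subsets
of `S`. -/
def addLast (n : ℕ) : Below (lastErase n).1 ⥤ PropSubsets (Fin (n + 1)) :=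
  Monotone.functor
    (f := fun U => ⟨insert (Fin.last n) U.1, by
      obtain ⟨x, hxS, hxU⟩ := Finset.exists_of_ssubset U.2
      intro h
      have hx : x ∈ insert (Fin.last n) U.1 := by rw [h]; exact Finset.mem_univ x
      rcases Finset.mem_insert.mp hx with h1 | h2
      · exact (Finset.mem_erase.mp hxS).1 h1
      · exact hxU h2⟩)
    (fun U V h => Finset.insert_subset_insert _ h)

/-- The natural transformation `X|_{S'} ⟶ X'`, with components `X(T) ⟶ X(T ∪ {last})`. -/
def restrToAddLast (n : ℕ) (X : PropSubsets (Fin (n + 1)) ⥤ SSet) :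
    belowInclP (lastErase n) ⋙ X ⟶ addLast n ⋙ X where
  app U := X.map (homOfLE
    (show (belowInclP (lastErase n)).obj U ≤ (addLast n).obj U from
      Finset.subset_insert _ _))
  naturality U V g := by
    dsimp
    rw [← X.map_comp, ← X.map_comp]
    congr 1

/-! ### Auxiliary type-level development -/

universe u

section TypeLevel

variable {α : Type} [Fintype α] [DecidableEq α]

lemma map_map (F : PropSubsets α ⥤ Type u) {U V W : PropSubsets α} (h1 : U ≤ V) (h2 : V ≤ W)
    (x : F.obj U) :
    F.map (homOfLE h2) (F.map (homOfLE h1) x) = F.map (homOfLE (h1.trans h2)) x := by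
  rw [← FunctorToTypes.map_comp_apply, homOfLE_comp]

lemma map_id' (F : PropSubsets α ⥤ Type u) {U : PropSubsets α} (h : U ≤ U) (x : F.obj U) :
    F.map (homOfLE h) x = x := by
  rw [Subsingleton.elim (homOfLE h) (𝟙 U), FunctorToTypes.map_id_apply]

/-- Two elements of the colimit-sigma are joined through a common refinement. -/
def MeetRel (F : PropSubsets α ⥤ Type u) (a b : Σ V : PropSubsets α, F.obj V) : Prop :=
  ∃ (V : PropSubsets α) (h1 : V ≤ a.1) (h2 : V ≤ b.1) (v : F.obj V),
    F.map (homOfLE h1) v = a.2 ∧ F.map (homOfLE h2) v = b.2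

lemma meetRel_refl (F : PropSubsets α ⥤ Type u) (a : Σ V : PropSubsets α, F.obj V) :
    MeetRel F a a :=
  ⟨a.1, le_rfl, le_rfl, a.2, map_id' F _ _, map_id' F _ _⟩

lemma meetRel_symm {F : PropSubsets α ⥤ Type u} {a b : Σ V : PropSubsets α, F.obj V}
    (h : MeetRel F a b) : MeetRel F b a := by
  obtain ⟨V, h1, h2, v, e1, e2⟩ := h
  exact ⟨V, h2, h1, v, e2, e1⟩

/-- The "amalgamation" property at a proper subset `T`. -/
def Dd (F : PropSubsets α ⥤ Type u) (T : PropSubsets α) : Prop :=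
  ∀ (W W' : PropSubsets α) (hW : W ≤ T) (hW' : W' ≤ T) (w : F.obj W) (w' : F.obj W'),
    F.map (homOfLE hW) w = F.map (homOfLE hW') w' → MeetRel F ⟨W, w⟩ ⟨W', w'⟩

lemma meetRel_trans {F : PropSubsets α ⥤ Type u} {a b c : Σ V : PropSubsets α, F.obj V}
    (hD : Dd F b.1) (hab : MeetRel F a b) (hbc : MeetRel F b c) : MeetRel F a c := by
  obtain ⟨V, h1, h2, v, e1, e2⟩ := hab
  obtain ⟨V', h1', h2', v', e1', e2'⟩ := hbc
  obtain ⟨U, g1, g2, u, f1, f2⟩ := hD V V' h2 h1' v v' (e2.trans e1'.symm)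
  refine ⟨U, g1.trans h1, g2.trans h2', u, ?_, ?_⟩
  · rw [← map_map F g1 h1, f1, e1]
  · rw [← map_map F g2 h2', f2, e2']

/-- The type-level canonical map `colim_{𝒫̄(T)} F ⟶ F(T)`. -/
noncomputable def descT (F : PropSubsets α ⥤ Type u) (T : PropSubsets α) :
    colimit (belowInclP T ⋙ F) ⟶ F.obj T :=
  colimit.desc (belowInclP T ⋙ F)
    { pt := F.obj T
      ι :=
        { app := fun (U : Below T.1) =>
            F.map (homOfLE (show (belowInclP T).obj U ≤ T from U.2.subset))
          naturality := fun U V g => by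
            ext x
            dsimp
            rw [← FunctorToTypes.map_comp_apply]
            exact congrArg (fun f => F.map f x) (Subsingleton.elim _ _) } }

/-- Claim `C(T)`: zigzags in the colimit over proper subsets of `T` can be realized by
a single common refinement. -/
def Cc (F : PropSubsets α ⥤ Type u) (T : PropSubsets α) : Prop :=
  ∀ (a b : Σ U : Below T.1, (belowInclP T ⋙ F).obj U),
    Relation.EqvGen (belowInclP T ⋙ F).ColimitTypeRel a b →
    MeetRel F ⟨(belowInclP T).obj a.1, a.2⟩ ⟨(belowInclP T).obj b.1, b.2⟩

lemma cd_aux (F : PropSubsets α ⥤ Type u)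
    (hF : ∀ T : PropSubsets α, Function.Injective (descT F T)) :
    ∀ (k : ℕ) (T : PropSubsets α), T.1.card < k → Cc F T ∧ Dd F T := by
  intro k
  induction k with
  | zero => intro T h; omega
  | succ k IH =>
    intro T hT
    have hC : Cc F T := by
      intro a b h
      induction h with
      | rel x y hxy =>
        obtain ⟨f, hf⟩ := hxy
        refine ⟨(belowInclP T).obj x.1, le_rfl, leOfHom ((belowInclP T).map f), x.2,
          map_id' F _ _, ?_⟩
        rw [Subsingleton.elim (homOfLE (leOfHom ((belowInclP T).map f)))
          ((belowInclP T).map f)]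
        exact hf.symm
      | refl x => exact meetRel_refl F _
      | symm x y h ih => exact meetRel_symm ih
      | trans x y z h1 h2 ih1 ih2 =>
        refine meetRel_trans ?_ ih1 ih2
        exact (IH ((belowInclP T).obj y.1)
          (lt_of_lt_of_le (Finset.card_lt_card y.1.2) (Nat.lt_succ_iff.1 hT))).2
    refine ⟨hC, ?_⟩
    intro W W' hW hW' w w' hww
    by_cases hWT : W = T
    · subst hWT
      refine ⟨W', hW', le_rfl, w', ?_, map_id' F _ _⟩
      rw [← hww, map_id' F _ _]
    · by_cases hWT' : W' = T
      · subst hWT'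
        refine ⟨W, le_rfl, hW, w, map_id' F _ _, ?_⟩
        rw [hww, map_id' F _ _]
      · have hWlt : W.1 ⊂ T.1 := lt_of_le_of_ne hW (by simpa [Subtype.ext_iff] using hWT)
        have hWlt' : W'.1 ⊂ T.1 := lt_of_le_of_ne hW' (by simpa [Subtype.ext_iff] using hWT')
        have h1 : colimit.ι (belowInclP T ⋙ F) ⟨W.1, hWlt⟩ w =
            colimit.ι (belowInclP T ⋙ F) ⟨W'.1, hWlt'⟩ w' := by
          apply hF T
          show descT F T (colimit.ι (belowInclP T ⋙ F) ⟨W.1, hWlt⟩ w) = _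
          erw [descT, colimit.ι_desc_apply (F := belowInclP T ⋙ F), colimit.ι_desc_apply (F := belowInclP T ⋙ F)]
          exact hww
        exact hC ⟨⟨W.1, hWlt⟩, w⟩ ⟨⟨W'.1, hWlt'⟩, w'⟩ (Limits.Types.colimit_eq h1)

lemma dd_all (F : PropSubsets α ⥤ Type u)
    (hF : ∀ T : PropSubsets α, Function.Injective (descT F T)) (T : PropSubsets α) :
    Dd F T :=
  (cd_aux F hF (T.1.card + 1) T (Nat.lt_succ_self _)).2

lemma eqvGen_meetRel (F : PropSubsets α ⥤ Type u)
    (hF : ∀ T : PropSubsets α, Function.Injective (descT F T))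
    {a b : Σ V : PropSubsets α, F.obj V}
    (h : Relation.EqvGen F.ColimitTypeRel a b) : MeetRel F a b := by
  induction h with
  | rel x y hxy =>
    obtain ⟨f, hf⟩ := hxy
    refine ⟨x.1, le_rfl, leOfHom f, x.2, map_id' F _ _, ?_⟩
    rw [Subsingleton.elim (homOfLE (leOfHom f)) f]
    exact hf.symm
  | refl x => exact meetRel_refl F _
  | symm x y h ih => exact meetRel_symm ih
  | trans x y z h1 h2 ih1 ih2 => exact meetRel_trans (dd_all F hF y.1) ih1 ih2

lemma iota_inj (F : PropSubsets α ⥤ Type u)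
    (hF : ∀ T : PropSubsets α, Function.Injective (descT F T)) (T : PropSubsets α) :
    Function.Injective (colimit.ι F T) := by
  intro y y' h
  obtain ⟨V, h1, h2, v, e1, e2⟩ :=
    eqvGen_meetRel F hF (Limits.Types.colimit_eq (F := F) (j := T) (j' := T) h)
  have : F.map (homOfLE h1) v = F.map (homOfLE h2) v := rfl
  exact e1.symm.trans (this.trans e2)

end TypeLevel

section PreInj

lemma pre_inj (n : ℕ) (F : PropSubsets (Fin (n + 1)) ⥤ Type u)
    (hF : ∀ T : PropSubsets (Fin (n + 1)), Function.Injective (descT F T)) :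
    Function.Injective (colimit.pre F (addLast n)) := by
  intro p q h
  obtain ⟨V, z, rfl⟩ := Limits.Types.jointly_surjective' p
  obtain ⟨V', z', rfl⟩ := Limits.Types.jointly_surjective' q
  rw [← types_comp_apply (colimit.ι _ V) (colimit.pre F (addLast n)),
    ← types_comp_apply (colimit.ι _ V') (colimit.pre F (addLast n)),
    colimit.ι_pre, colimit.ι_pre] at h
  obtain ⟨W, h1, h2, w, e1, e2⟩ := eqvGen_meetRel F hF (Limits.Types.colimit_eq h)
  -- build the common refinement in the `addLast` diagram
  have hsub : W.1.erase (Fin.last n) ⊆ V.1 := by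
    intro x hx
    obtain ⟨hxne, hxW⟩ := Finset.mem_erase.1 hx
    rcases Finset.mem_insert.1 (h1 hxW) with h' | h'
    · exact absurd h' hxne
    · exact h'
  have hsub' : W.1.erase (Fin.last n) ⊆ V'.1 := by
    intro x hx
    obtain ⟨hxne, hxW⟩ := Finset.mem_erase.1 hx
    rcases Finset.mem_insert.1 (h2 hxW) with h' | h'
    · exact absurd h' hxne
    · exact h'
  have hV'' : W.1.erase (Fin.last n) ⊂ (lastErase n).1 := lt_of_le_of_lt hsub V.2
  set V'' : Below (lastErase n).1 := ⟨W.1.erase (Fin.last n), hV''⟩ with hV''def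
  have hW3 : W ≤ (addLast n).obj V'' := by
    intro x hx
    by_cases hxl : x = Fin.last n
    · subst hxl; exact Finset.mem_insert_self _ _
    · exact Finset.mem_insert_of_mem (Finset.mem_erase.2 ⟨hxl, hx⟩)
  set w' : F.obj ((addLast n).obj V'') := F.map (homOfLE hW3) w with hw'def
  have key : ∀ (V₀ : Below (lastErase n).1) (z₀ : F.obj ((addLast n).obj V₀))
      (hs : W.1.erase (Fin.last n) ⊆ V₀.1) (hle : W ≤ (addLast n).obj V₀)
      (he : F.map (homOfLE hle) w = z₀),
      colimit.ι (addLast n ⋙ F) V₀ z₀ = colimit.ι (addLast n ⋙ F) V'' w' := by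
    intro V₀ z₀ hs hle he
    have hf : V'' ≤ V₀ := hs
    have : (addLast n ⋙ F).map (homOfLE hf) w' = z₀ := by
      show F.map ((addLast n).map (homOfLE hf)) w' = z₀
      rw [hw'def, Subsingleton.elim ((addLast n).map (homOfLE hf))
        (homOfLE (show (addLast n).obj V'' ≤ (addLast n).obj V₀ from
          Finset.insert_subset_insert _ hs)), map_map]
      rw [← he]
    exact (Limits.Types.colimit_sound (homOfLE hf) this).symm
  rw [key V z hsub h1 e1, key V' z' hsub' h2 e2]

end PreInj

section Transfer

variable {α : Type} [Fintype α] [DecidableEq α]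

lemma descT_inj_of_cofibrant (X : PropSubsets α ⥤ SSet) (h : CofibrantProp X)
    (k : SimplexCategoryᵒᵖ) (T : PropSubsets α) :
    Function.Injective (descT (X ⋙ (evaluation SimplexCategoryᵒᵖ (Type _)).obj k) T) := by
  have hcomp : (colimitObjIsoColimitCompEvaluation (belowInclP T ⋙ X) k).inv ≫
      (canonicalDescP X T).app k =
      descT (X ⋙ (evaluation SimplexCategoryᵒᵖ (Type _)).obj k) T := by
    apply colimit.hom_ext
    intro U
    rw [descT]
    erw [colimit.ι_desc]
    rw [← Category.assoc]
    erw [colimitObjIsoColimitCompEvaluation_ι_inv (belowInclP T ⋙ X) U k]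
    rw [← NatTrans.comp_app, canonicalDescP, colimit.ι_desc]
    rfl
  haveI := h T
  have hmono : Mono ((canonicalDescP X T).app k) := inferInstance
  have hinj1 : Function.Injective ((canonicalDescP X T).app k) :=
    (mono_iff_injective _).1 hmono
  have hinj2 : Function.Injective
      (colimitObjIsoColimitCompEvaluation (belowInclP T ⋙ X) k).inv :=
    (mono_iff_injective _).1 inferInstance
  rw [← hcomp]
  exact hinj1.comp hinj2

lemma mono_iota_of_cofibrant (X : PropSubsets α ⥤ SSet) (h : CofibrantProp X)
    (T : PropSubsets α) : Mono (colimit.ι X T) := by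
  haveI : ∀ k, Mono ((colimit.ι X T).app k) := by
    intro k
    rw [mono_iff_injective]
    have happ : (colimit.ι X T).app k =
        colimit.ι (X ⋙ (evaluation SimplexCategoryᵒᵖ (Type _)).obj k) T ≫
          (colimitObjIsoColimitCompEvaluation X k).inv := by
      rw [Iso.eq_comp_inv]
      exact colimitObjIsoColimitCompEvaluation_ι_app_hom X T k
    rw [happ, ConcreteCategory.coe_comp]
    exact (((mono_iff_injective _).1 inferInstance).comp
      (iota_inj _ (descT_inj_of_cofibrant X h k) T))
  exact NatTrans.mono_of_mono_app _

lemma mono_pre_of_cofibrant (n : ℕ) (X : PropSubsets (Fin (n + 1)) ⥤ SSet)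
    (h : CofibrantProp X) : Mono (colimit.pre X (addLast n)) := by
  haveI : ∀ k, Mono ((colimit.pre X (addLast n)).app k) := by
    intro k
    have hcomp : (colimitObjIsoColimitCompEvaluation (addLast n ⋙ X) k).inv ≫
        (colimit.pre X (addLast n)).app k ≫ (colimitObjIsoColimitCompEvaluation X k).hom =
        colimit.pre (X ⋙ (evaluation SimplexCategoryᵒᵖ (Type _)).obj k) (addLast n) := by
      refine colimit.hom_ext
        (F := addLast n ⋙ (X ⋙ (evaluation SimplexCategoryᵒᵖ (Type _)).obj k)) fun V => ?_
      rw [colimit.ι_pre]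
      rw [← Category.assoc]
      erw [colimitObjIsoColimitCompEvaluation_ι_inv (addLast n ⋙ X) V k]
      rw [← Category.assoc, ← NatTrans.comp_app, colimit.ι_pre]
      erw [colimitObjIsoColimitCompEvaluation_ι_app_hom X ((addLast n).obj V) k]
    have happ : (colimit.pre X (addLast n)).app k =
        (colimitObjIsoColimitCompEvaluation (addLast n ⋙ X) k).hom ≫
          colimit.pre (X ⋙ (evaluation SimplexCategoryᵒᵖ (Type _)).obj k) (addLast n) ≫
            (colimitObjIsoColimitCompEvaluation X k).inv := by
      rw [← hcomp]
      simp
    rw [mono_iff_injective, happ]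
    exact (((mono_iff_injective _).1 inferInstance).comp
        (pre_inj n _ (descT_inj_of_cofibrant X h k))).comp
      ((mono_iff_injective _).1 inferInstance)
  exact NatTrans.mono_of_mono_app _

end Transfer

section Pushout

variable (n : ℕ)

/-- For a proper subset `T` containing the last element, the set `T \ {last}` as a
proper subset of `S'`. -/
def eraseBelow (T : PropSubsets (Fin (n + 1))) (h : Fin.last n ∈ T.1) :
    Below (lastErase n).1 :=
  ⟨T.1.erase (Fin.last n), by
    have hsub : T.1.erase (Fin.last n) ⊆ Finset.univ.erase (Fin.last n) :=
      Finset.erase_subset_erase _ (Finset.subset_univ _)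
    refine lt_of_le_of_ne hsub ?_
    intro he
    apply T.2
    rw [← Finset.insert_erase h, he]
    show insert (Fin.last n) (Finset.univ.erase (Fin.last n)) = Finset.univ
    exact Finset.insert_erase (Finset.mem_univ _)⟩

lemma addLast_eraseBelow (T : PropSubsets (Fin (n + 1))) (h : Fin.last n ∈ T.1) :
    (addLast n).obj (eraseBelow n T h) = T :=
  Subtype.ext (Finset.insert_erase h)

/-- The comparison map `T ⟶ T` realized through `insert last (erase last T)`. -/
def toAdd (T : PropSubsets (Fin (n + 1))) (h : Fin.last n ∈ T.1) :
    T ⟶ (addLast n).obj (eraseBelow n T h) :=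
  homOfLE (addLast_eraseBelow n T h).symm.le

/-- The inclusion `T ⟶ S'` for `T` not containing the last element. -/
def toErase (T : PropSubsets (Fin (n + 1))) (h : Fin.last n ∉ T.1) :
    T ⟶ lastErase n :=
  homOfLE (Finset.subset_erase.2 ⟨Finset.subset_univ _, h⟩)

variable (X : PropSubsets (Fin (n + 1)) ⥤ SSet)

/-- The glued cocone on `X` built from a cocone on the pushout diagram. -/
noncomputable def glueCocone (Z : SSet) (g : colimit (addLast n ⋙ X) ⟶ Z)
    (f : X.obj (lastErase n) ⟶ Z)
    (hfg : colimMap (restrToAddLast n X) ≫ g = canonicalDescP X (lastErase n) ≫ f) :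
    Cocone X where
  pt := Z
  ι :=
    { app := fun T =>
        if h : Fin.last n ∈ T.1 then
          X.map (toAdd n T h) ≫ colimit.ι (addLast n ⋙ X) (eraseBelow n T h) ≫ g
        else
          X.map (toErase n T h) ≫ f
      naturality := fun T T' φ => by
        simp only [Functor.const_obj_map, Category.comp_id]
        by_cases h' : Fin.last n ∈ T'.1
        · rw [dif_pos h']
          by_cases h : Fin.last n ∈ T.1
          · rw [dif_pos h]
            have hE : eraseBelow n T h ≤ eraseBelow n T' h' :=
              Finset.erase_subset_erase _ (leOfHom φ)
            rw [← colimit.w (addLast n ⋙ X) (homOfLE hE)]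
            simp only [← Category.assoc]
            congr 2
            show X.map φ ≫ X.map (toAdd n T' h') =
              X.map (toAdd n T h) ≫ X.map ((addLast n).map (homOfLE hE))
            rw [← X.map_comp, ← X.map_comp]
            exact congrArg X.map (Subsingleton.elim _ _)
          · rw [dif_neg h]
            have hTU : T ≤ (belowInclP (lastErase n)).obj (eraseBelow n T' h') := by
              intro x hx
              exact Finset.mem_erase.2 ⟨fun hxl => h (hxl ▸ hx), leOfHom φ hx⟩
            have key : X.map (homOfLE (show (belowInclP (lastErase n)).obj
                  (eraseBelow n T' h') ≤ (addLast n).obj (eraseBelow n T' h') from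
                  Finset.subset_insert _ _)) ≫
                colimit.ι (addLast n ⋙ X) (eraseBelow n T' h') ≫ g =
                X.map (homOfLE (show (belowInclP (lastErase n)).obj (eraseBelow n T' h') ≤
                  lastErase n from (eraseBelow n T' h').2.subset)) ≫ f := by
              have hkey := congrArg
                (fun (t : colimit (belowInclP (lastErase n) ⋙ X) ⟶ Z) =>
                  colimit.ι (belowInclP (lastErase n) ⋙ X) (eraseBelow n T' h') ≫ t) hfg
              beta_reduce at hkey
              rw [canonicalDescP] at hkey
              simp only [← Category.assoc] at hkey
              rw [ι_colimMap, colimit.ι_desc] at hkey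
              dsimp only [restrToAddLast] at hkey
              simp only [Category.assoc] at hkey
              exact hkey
            have hcomb : X.map φ ≫ X.map (toAdd n T' h') = X.map (homOfLE hTU) ≫
                X.map (homOfLE (show (belowInclP (lastErase n)).obj (eraseBelow n T' h') ≤
                  (addLast n).obj (eraseBelow n T' h') from Finset.subset_insert _ _)) := by
              rw [← X.map_comp, ← X.map_comp]
              exact congrArg X.map (Subsingleton.elim _ _)
            rw [← Category.assoc, hcomb, Category.assoc, key, ← Category.assoc, ← X.map_comp]
            exact congrArg (· ≫ f) (congrArg X.map (Subsingleton.elim _ _))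
        · rw [dif_neg h']
          have h : Fin.last n ∉ T.1 := fun hl => h' (leOfHom φ hl)
          rw [dif_neg h, ← Category.assoc, ← X.map_comp]
          exact congrArg (· ≫ f) (congrArg X.map (Subsingleton.elim _ _))
    }

lemma glue_comm :
    colimMap (restrToAddLast n X) ≫ colimit.pre X (addLast n) =
      canonicalDescP X (lastErase n) ≫ colimit.ι X (lastErase n) := by
  apply colimit.hom_ext
  intro U
  rw [← Category.assoc, ι_colimMap, Category.assoc, colimit.ι_pre]
  rw [canonicalDescP, colimit.ι_desc_assoc]
  dsimp only [restrToAddLast]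
  rw [colimit.w, colimit.w]

end Pushout

/-- For a functor `X` on the poset of proper subsets of `S = {1, …, n}` (realized as
`Fin (n+1)`), with `S' = S \ {n}`, the square

colim_{𝒫̄(S')} X|_{S'} ⟶ colim_{𝒫̄(S')} X'
        |                        |
      X(S')          ⟶    colim_{𝒫̄(S)} X

is a pushout square; moreover, if `X` is a cofibrant functor, then both vertical maps
into `colim_{𝒫̄(S)} X` are monomorphisms. -/
theorem statement15 (n : ℕ) (X : PropSubsets (Fin (n + 1)) ⥤ SSet) :
    IsPushout (colimMap (restrToAddLast n X)) (canonicalDescP X (lastErase n))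
      (colimit.pre X (addLast n)) (colimit.ι X (lastErase n)) ∧
    (CofibrantProp X →
      Mono (colimit.ι X (lastErase n)) ∧ Mono (colimit.pre X (addLast n))) := by
  constructor
  · refine IsPushout.of_isColimit
      (c := PushoutCocone.mk (colimit.pre X (addLast n)) (colimit.ι X (lastErase n))
        (glue_comm n X))
      (PushoutCocone.IsColimit.mk (glue_comm n X)
        (fun s => colimit.desc X (glueCocone n X s.pt s.inl s.inr s.condition))
        (fun s => ?_) (fun s => ?_) (fun s m hl hr => ?_))
    · -- fac_left
      apply colimit.hom_ext
      intro V
      erw [← Category.assoc, colimit.ι_pre, colimit.ι_desc]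
      dsimp only [glueCocone]
      rw [dif_pos (show Fin.last n ∈ ((addLast n).obj V).1 from Finset.mem_insert_self _ _)]
      have hlast : Fin.last n ∉ V.1 :=
        fun hv => Finset.notMem_erase _ _ (V.2.subset hv)
      have hf : V ≤ eraseBelow n ((addLast n).obj V) (Finset.mem_insert_self _ _) := by
        intro x hx
        exact Finset.mem_erase.2 ⟨fun hxl => hlast (hxl ▸ hx), Finset.mem_insert_of_mem hx⟩
      rw [← colimit.w (addLast n ⋙ X) (homOfLE hf)]
      simp only [← Category.assoc]
      congr 2
    · -- fac_right
      erw [colimit.ι_desc]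
      dsimp only [glueCocone]
      rw [dif_neg (show Fin.last n ∉ (lastErase n).1 from Finset.notMem_erase _ _)]
      rw [show toErase n (lastErase n) (Finset.notMem_erase _ _) = 𝟙 _ from
        Subsingleton.elim _ _, X.map_id, Category.id_comp]
    · -- uniq
      apply colimit.hom_ext
      intro T
      erw [colimit.ι_desc]
      by_cases h : Fin.last n ∈ T.1
      · dsimp only [glueCocone]
        rw [dif_pos h]
        rw [← colimit.w X (toAdd n T h),
          ← colimit.ι_pre X (addLast n) (eraseBelow n T h)]
        simp only [Category.assoc]
        rw [hl]
      · dsimp only [glueCocone]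
        rw [dif_neg h]
        rw [← colimit.w X (toErase n T h)]
        simp only [Category.assoc]
        rw [hr]
  · intro hcof
    exact ⟨mono_iota_of_cofibrant X hcof _, mono_pre_of_cofibrant n X hcof⟩

end Paper
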